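/- arXiv:2002.02922 — 4 statements merged into one kernel-verified Lean document; each statement's English description precedes it below -/
import Mathlib

section
/- For any continuous f, B : [0,∞) → ℝ with f(0) ≥ B(0), the reflected path R_f B(t) = min( inf_{0≤s≤t}(f(s)+B(t)−B(s)), B(t) ) is itself a continuous function of t. -/
/-- Skorokhod reflection of `B` off `f`. -/
noncomputable def skorokhodReflect (f B : ℝ → ℝ) (t : ℝ) : ℝ :=
  min (sInf ((fun s => f s + B t - B s) '' Set.Icc 0 t)) (B t)

private lemma runInf_aux (h : ℝ → ℝ) (hc : ContinuousOn h (Set.Ici 0)) (a b ε : ℝ)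
    (ha : 0 ≤ a) (hab : a ≤ b)
    (hε : ∀ s ∈ Set.Icc a b, h a - ε ≤ h s) :
    sInf (h '' Set.Icc 0 a) - ε ≤ sInf (h '' Set.Icc 0 b) ∧
      sInf (h '' Set.Icc 0 b) ≤ sInf (h '' Set.Icc 0 a) := by
  have hb : (0:ℝ) ≤ b := le_trans ha hab
  have hcompa : IsCompact (h '' Set.Icc 0 a) :=
    (isCompact_Icc).image_of_continuousOn (hc.mono (fun x hx => hx.1))
  have hcompb : IsCompact (h '' Set.Icc 0 b) :=
    (isCompact_Icc).image_of_continuousOn (hc.mono (fun x hx => hx.1))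
  have hnea : (h '' Set.Icc 0 a).Nonempty := ⟨h 0, Set.mem_image_of_mem _ ⟨le_rfl, ha⟩⟩
  have hneb : (h '' Set.Icc 0 b).Nonempty := ⟨h 0, Set.mem_image_of_mem _ ⟨le_rfl, hb⟩⟩
  have hbdda := hcompa.bddBelow
  have hbddb := hcompb.bddBelow
  have hε0 : 0 ≤ ε := by have := hε a ⟨le_rfl, hab⟩; linarith
  constructor
  · apply le_csInf hneb
    rintro x ⟨s, hs, rfl⟩
    rcases le_total s a with hsa | has
    · have : sInf (h '' Set.Icc 0 a) ≤ h s :=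
        csInf_le hbdda (Set.mem_image_of_mem _ ⟨hs.1, hsa⟩)
      linarith
    · have h1 : h a - ε ≤ h s := hε s ⟨has, hs.2⟩
      have h2 : sInf (h '' Set.Icc 0 a) ≤ h a :=
        csInf_le hbdda (Set.mem_image_of_mem _ ⟨ha, le_rfl⟩)
      linarith
  · exact csInf_le_csInf hbddb hnea
      (Set.image_mono (Set.Icc_subset_Icc le_rfl hab))

private lemma runInf_continuous (h : ℝ → ℝ) (hc : ContinuousOn h (Set.Ici 0)) :
    ContinuousOn (fun t => sInf (h '' Set.Icc 0 t)) (Set.Ici 0) := by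
  rw [Metric.continuousOn_iff]
  intro t0 ht0 ε hε
  have hcomp : IsCompact (Set.Icc (0:ℝ) (t0 + 1)) := isCompact_Icc
  have huc : UniformContinuousOn h (Set.Icc 0 (t0 + 1)) :=
    hcomp.uniformContinuousOn_of_continuous (hc.mono (fun x hx => hx.1))
  obtain ⟨δ, hδ, hδ'⟩ := Metric.uniformContinuousOn_iff.mp huc (ε/2) (by linarith)
  refine ⟨min δ 1, lt_min hδ one_pos, fun t ht hdist => ?_⟩
  have ht0' : (0:ℝ) ≤ t0 := ht0
  have ht' : (0:ℝ) ≤ t := ht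
  set a := min t t0 with ha_def
  set b := max t t0 with hb_def
  have ha : (0:ℝ) ≤ a := le_min ht' ht0'
  have hab : a ≤ b := min_le_max
  have hba : b - a < min δ 1 := by
    rw [Real.dist_eq] at hdist
    rcases le_total t t0 with h1 | h1
    · simp only [ha_def, hb_def, min_eq_left h1, max_eq_right h1]
      rw [abs_sub_comm] at hdist
      calc t0 - t ≤ |t0 - t| := le_abs_self _
      _ < min δ 1 := hdist
    · simp only [ha_def, hb_def, min_eq_right h1, max_eq_left h1]
      calc t - t0 ≤ |t - t0| := le_abs_self _
      _ < min δ 1 := hdist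
  have hble : b ≤ t0 + 1 := by
    have h1 : b - a < 1 := lt_of_lt_of_le hba (min_le_right _ _)
    have h2 : a ≤ t0 := min_le_right _ _
    linarith
  have key : ∀ s ∈ Set.Icc a b, h a - ε/2 ≤ h s := by
    intro s hs
    have hsmem : s ∈ Set.Icc (0:ℝ) (t0 + 1) := ⟨le_trans ha hs.1, le_trans hs.2 hble⟩
    have hamem : a ∈ Set.Icc (0:ℝ) (t0 + 1) := ⟨ha, le_trans hab hble⟩
    have hd : dist s a < δ := by
      rw [Real.dist_eq, abs_of_nonneg (by linarith [hs.1])]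
      have := hs.2
      have := lt_of_lt_of_le hba (min_le_left _ _)
      linarith
    have := hδ' s hsmem a hamem hd
    rw [Real.dist_eq] at this
    have := abs_lt.mp this
    linarith [this.1]
  obtain ⟨h1, h2⟩ := runInf_aux h hc a b (ε/2) ha hab key
  have habs : |sInf (h '' Set.Icc 0 b) - sInf (h '' Set.Icc 0 a)| ≤ ε/2 := by
    rw [abs_le]; constructor <;> linarith
  rcases le_total t t0 with hcase | hcase
  · have hea : a = t := min_eq_left hcase
    have heb : b = t0 := max_eq_right hcase
    rw [Real.dist_eq, abs_sub_comm]
    calc |sInf (h '' Set.Icc 0 t0) - sInf (h '' Set.Icc 0 t)|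
        = |sInf (h '' Set.Icc 0 b) - sInf (h '' Set.Icc 0 a)| := by rw [hea, heb]
      _ ≤ ε/2 := habs
      _ < ε := by linarith
  · have hea : a = t0 := min_eq_right hcase
    have heb : b = t := max_eq_left hcase
    rw [Real.dist_eq]
    calc |sInf (h '' Set.Icc 0 t) - sInf (h '' Set.Icc 0 t0)|
        = |sInf (h '' Set.Icc 0 b) - sInf (h '' Set.Icc 0 a)| := by rw [hea, heb]
      _ ≤ ε/2 := habs
      _ < ε := by linarith

theorem skorokhodReflect_continuous (f B : ℝ → ℝ)
    (hf : ContinuousOn f (Set.Ici 0)) (hB : ContinuousOn B (Set.Ici 0))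
    (h0 : B 0 ≤ f 0) :
    ContinuousOn (skorokhodReflect f B) (Set.Ici 0) := by
  set h : ℝ → ℝ := fun s => f s - B s with hh_def
  have hh : ContinuousOn h (Set.Ici 0) := hf.sub hB
  have heq : Set.EqOn (skorokhodReflect f B)
      (fun t => B t + min (sInf (h '' Set.Icc 0 t)) 0) (Set.Ici 0) := by
    intro t ht
    have ht' : (0:ℝ) ≤ t := ht
    have himg : (fun s => f s + B t - B s) '' Set.Icc 0 t
        = (fun x => x + B t) '' (h '' Set.Icc 0 t) := by
      rw [Set.image_image]
      apply Set.image_congr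
      intro s _
      simp [hh_def]; ring
    have hne : (h '' Set.Icc 0 t).Nonempty := ⟨h 0, Set.mem_image_of_mem _ ⟨le_rfl, ht'⟩⟩
    have hbdd : BddBelow (h '' Set.Icc 0 t) :=
      ((isCompact_Icc).image_of_continuousOn (hh.mono (fun x hx => hx.1))).bddBelow
    have hcomp : IsCompact (h '' Set.Icc 0 t) :=
      (isCompact_Icc).image_of_continuousOn (hh.mono (fun x hx => hx.1))
    have hsinf : sInf ((fun x => x + B t) '' (h '' Set.Icc 0 t))
        = sInf (h '' Set.Icc 0 t) + B t := by
      apply le_antisymm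
      · have hmem : sInf (h '' Set.Icc 0 t) ∈ h '' Set.Icc 0 t := hcomp.sInf_mem hne
        have hbdd2 : BddBelow ((fun x => x + B t) '' (h '' Set.Icc 0 t)) := by
          obtain ⟨m, hm⟩ := hbdd
          exact ⟨m + B t, by rintro x ⟨y, hy, rfl⟩; have := hm hy; simpa using by linarith⟩
        exact csInf_le hbdd2 (Set.mem_image_of_mem _ hmem)
      · apply le_csInf (hne.image _)
        rintro x ⟨y, hy, rfl⟩
        have := csInf_le hbdd hy
        simpa using by linarith
    simp only [skorokhodReflect, himg, hsinf]
    rcases le_total (sInf (h '' Set.Icc 0 t)) 0 with hg | hg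
    · rw [min_eq_left (by linarith), min_eq_left hg]; ring
    · rw [min_eq_right (by linarith), min_eq_right hg]; ring
  refine ContinuousOn.congr ?_ heq
  exact hB.add ((continuous_id.min continuous_const).comp_continuousOn
    (runInf_continuous h hh))
end

section
/- For integers m ≥ 1 and reals t, x, y, the rescaled binomial kernel converges: κ^{−(m−1)/2} · C(⌊√κ x + κt⌋ − ⌊√κ y + κt⌋ − 1, m−1) · 1{⌊√κ x + κt⌋ ≥ ⌊√κ y + κt⌋ + m} → (x−y)^{m−1}/(m−1)! · 1{x > y} as κ → ∞, for x ≠ y. -/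
open Filter

private lemma sqrt_tendsto_atTop' : Tendsto Real.sqrt atTop atTop := by
  apply tendsto_atTop_atTop.2
  intro b
  refine ⟨b ^ 2, fun a ha => ?_⟩
  calc b ≤ |b| := le_abs_self b
    _ = Real.sqrt (b ^ 2) := (Real.sqrt_sq_eq_abs b).symm
    _ ≤ Real.sqrt a := Real.sqrt_le_sqrt ha

private lemma cast_descFactorial_real (n k : ℕ) (h : k ≤ n) :
    (n.descFactorial k : ℝ) = ∏ i ∈ Finset.range k, ((n : ℝ) - i) := by
  induction k with
  | zero => simp
  | succ k ih =>
    have hk : k ≤ n := Nat.le_of_succ_le h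
    rw [Nat.descFactorial_succ, Finset.prod_range_succ, ← ih hk]
    have : ((n - k : ℕ) : ℝ) = (n : ℝ) - k := by
      push_cast [Nat.cast_sub hk]; ring
    push_cast [Nat.cast_sub hk]
    ring

private lemma cast_choose_real (n k : ℕ) :
    (n.choose k : ℝ) = (n.descFactorial k : ℝ) / (k.factorial : ℝ) := by
  rw [Nat.choose_eq_descFactorial_div_factorial]
  rw [Nat.cast_div (Nat.factorial_dvd_descFactorial n k)]
  exact_mod_cast Nat.factorial_ne_zero k

private lemma tendsto_gap (t x y : ℝ) :
    Tendsto (fun κ : ℝ =>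
      ((⌊Real.sqrt κ * x + κ * t⌋ - ⌊Real.sqrt κ * y + κ * t⌋ : ℤ) : ℝ) / Real.sqrt κ)
      atTop (nhds (x - y)) := by
  have hs : Tendsto (fun κ : ℝ => 1 / Real.sqrt κ) atTop (nhds 0) :=
    tendsto_inv_atTop_zero.comp sqrt_tendsto_atTop' |>.congr (fun κ => (one_div _).symm)
  have hlow : Tendsto (fun κ : ℝ => (x - y) - 1 / Real.sqrt κ) atTop (nhds (x - y)) := by
    simpa using (tendsto_const_nhds (x := x - y) (f := atTop)).sub hs
  have hhigh : Tendsto (fun κ : ℝ => (x - y) + 1 / Real.sqrt κ) atTop (nhds (x - y)) := by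
    simpa using (tendsto_const_nhds (x := x - y) (f := atTop)).add hs
  apply tendsto_of_tendsto_of_tendsto_of_le_of_le' hlow hhigh
  · filter_upwards [eventually_ge_atTop (1 : ℝ)] with κ hκ
    have hsp : 0 < Real.sqrt κ := Real.sqrt_pos.2 (by linarith)
    have h1 : Real.sqrt κ * x + κ * t - 1 < (⌊Real.sqrt κ * x + κ * t⌋ : ℝ) :=
      Int.sub_one_lt_floor _
    have h2 : (⌊Real.sqrt κ * y + κ * t⌋ : ℝ) ≤ Real.sqrt κ * y + κ * t :=
      Int.floor_le _
    rw [le_div_iff₀ hsp]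
    have hone : 1 / Real.sqrt κ * Real.sqrt κ = 1 := by field_simp
    push_cast
    nlinarith
  · filter_upwards [eventually_ge_atTop (1 : ℝ)] with κ hκ
    have hsp : 0 < Real.sqrt κ := Real.sqrt_pos.2 (by linarith)
    have h1 : (⌊Real.sqrt κ * x + κ * t⌋ : ℝ) ≤ Real.sqrt κ * x + κ * t :=
      Int.floor_le _
    have h2 : Real.sqrt κ * y + κ * t - 1 < (⌊Real.sqrt κ * y + κ * t⌋ : ℝ) :=
      Int.sub_one_lt_floor _
    rw [div_le_iff₀ hsp]
    have hone : 1 / Real.sqrt κ * Real.sqrt κ = 1 := by field_simp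
    push_cast
    nlinarith

theorem binomial_kernel_diffusive_limit (m : ℕ) (hm : 1 ≤ m) (t x y : ℝ) (hxy : x ≠ y) :
    Tendsto (fun κ : ℝ =>
        κ ^ (-((m : ℝ) - 1) / 2) *
          (if ⌊Real.sqrt κ * x + κ * t⌋ ≥ ⌊Real.sqrt κ * y + κ * t⌋ + m then
            (Nat.choose (⌊Real.sqrt κ * x + κ * t⌋ - ⌊Real.sqrt κ * y + κ * t⌋ - 1).toNat
              (m - 1) : ℝ)
          else 0))
      atTop
      (nhds (if x > y then (x - y) ^ (m - 1) / (m - 1).factorial else 0)) := by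
  set g : ℝ → ℤ := fun κ => ⌊Real.sqrt κ * x + κ * t⌋ - ⌊Real.sqrt κ * y + κ * t⌋ with hg
  rcases lt_or_gt_of_ne hxy with hlt | hgt
  · -- x < y : the indicator is always 0
    rw [if_neg (not_lt.2 hlt.le)]
    have : ∀ κ : ℝ, (κ ^ (-((m : ℝ) - 1) / 2) *
          (if ⌊Real.sqrt κ * x + κ * t⌋ ≥ ⌊Real.sqrt κ * y + κ * t⌋ + m then
            (Nat.choose (⌊Real.sqrt κ * x + κ * t⌋ - ⌊Real.sqrt κ * y + κ * t⌋ - 1).toNat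
              (m - 1) : ℝ)
          else 0)) = 0 := by
      intro κ
      have hAB : Real.sqrt κ * x + κ * t ≤ Real.sqrt κ * y + κ * t := by
        nlinarith [Real.sqrt_nonneg κ]
      have hfl : ⌊Real.sqrt κ * x + κ * t⌋ ≤ ⌊Real.sqrt κ * y + κ * t⌋ := Int.floor_le_floor hAB
      rw [if_neg (by omega), mul_zero]
    simp only [this]
    exact tendsto_const_nhds
  · -- x > y
    rw [if_pos hgt]
    have hgap := tendsto_gap t x y
    have hsqrt : Tendsto Real.sqrt atTop atTop := sqrt_tendsto_atTop'
    -- g κ → ∞ (as real)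
    have hgtop : Tendsto (fun κ : ℝ => ((g κ : ℤ) : ℝ)) atTop atTop := by
      have h1 : Tendsto (fun κ : ℝ => ((g κ : ℤ) : ℝ) / Real.sqrt κ * Real.sqrt κ)
          atTop atTop := hgap.pos_mul_atTop (by linarith) hsqrt
      apply h1.congr'
      filter_upwards [eventually_ge_atTop (1 : ℝ)] with κ hκ
      have hsp : Real.sqrt κ ≠ 0 := ne_of_gt (Real.sqrt_pos.2 (by linarith))
      field_simp
    -- eventual equality with the nice product formula
    have hev : ∀ᶠ κ in atTop,
        κ ^ (-((m : ℝ) - 1) / 2) *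
          (if ⌊Real.sqrt κ * x + κ * t⌋ ≥ ⌊Real.sqrt κ * y + κ * t⌋ + m then
            (Nat.choose (⌊Real.sqrt κ * x + κ * t⌋ - ⌊Real.sqrt κ * y + κ * t⌋ - 1).toNat
              (m - 1) : ℝ)
          else 0) =
        (∏ i ∈ Finset.range (m - 1),
          ((((g κ : ℤ) : ℝ) - 1 - i) / Real.sqrt κ)) / ((m - 1).factorial : ℝ) := by
      filter_upwards [eventually_ge_atTop (1 : ℝ),
        hgtop.eventually_ge_atTop ((m : ℝ) + 1)] with κ hκ1 hκg
      have hκpos : (0 : ℝ) < κ := by linarith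
      have hsp : 0 < Real.sqrt κ := Real.sqrt_pos.2 hκpos
      have hgm : (m : ℤ) + 1 ≤ g κ := by exact_mod_cast hκg
      have hcond : ⌊Real.sqrt κ * x + κ * t⌋ ≥ ⌊Real.sqrt κ * y + κ * t⌋ + m := by
        simp only [hg] at hgm; omega
      rw [if_pos hcond]
      set n : ℕ := (g κ - 1).toNat with hn
      have hcast : ((n : ℤ) : ℝ) = ((g κ : ℤ) : ℝ) - 1 := by
        have : (n : ℤ) = g κ - 1 := Int.toNat_of_nonneg (by omega)
        rw [this]; push_cast; ring
      have hnm : m - 1 ≤ n := by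
        have : (m : ℤ) - 1 ≤ (n : ℤ) := by
          rw [Int.toNat_of_nonneg (by omega : (0:ℤ) ≤ g κ - 1)]; omega
        omega
      have hnr : (n : ℝ) = ((g κ : ℤ) : ℝ) - 1 := by exact_mod_cast hcast
      -- rpow simplification
      have hrpow : κ ^ (-((m : ℝ) - 1) / 2) = (Real.sqrt κ ^ (m - 1) : ℝ)⁻¹ := by
        have hmr : ((m : ℝ) - 1) = ((m - 1 : ℕ) : ℝ) := by
          push_cast [Nat.cast_sub hm]; ring
        rw [show (-((m : ℝ) - 1) / 2) = (1/2 : ℝ) * (-((m : ℝ) - 1)) by ring,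
          Real.rpow_mul hκpos.le, ← Real.sqrt_eq_rpow,
          Real.rpow_neg (Real.sqrt_nonneg κ), hmr, Real.rpow_natCast]
      rw [hrpow]
      have hprod : ∏ i ∈ Finset.range (m - 1), ((((g κ : ℤ) : ℝ) - 1 - i) / Real.sqrt κ)
          = (n.descFactorial (m - 1) : ℝ) / Real.sqrt κ ^ (m - 1) := by
        rw [Finset.prod_div_distrib, Finset.prod_const, Finset.card_range,
          cast_descFactorial_real n (m - 1) hnm, hnr]
      rw [hprod, cast_choose_real]
      field_simp
    apply Tendsto.congr' (hev.mono fun κ h => h.symm)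
    -- limit of the product formula
    have hfac : Tendsto (fun κ : ℝ =>
        ∏ i ∈ Finset.range (m - 1), ((((g κ : ℤ) : ℝ) - 1 - i) / Real.sqrt κ))
        atTop (nhds ((x - y) ^ (m - 1))) := by
      have : ((x - y) ^ (m - 1)) = ∏ _i ∈ Finset.range (m - 1), (x - y) := by
        rw [Finset.prod_const, Finset.card_range]
      rw [this]
      apply tendsto_finset_prod
      intro i _
      have hconst : Tendsto (fun κ : ℝ => (1 + (i : ℝ)) / Real.sqrt κ) atTop (nhds 0) := by
        apply Tendsto.div_atTop tendsto_const_nhds hsqrt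
      have := hgap.sub hconst
      rw [sub_zero] at this
      apply this.congr'
      filter_upwards [eventually_ge_atTop (1 : ℝ)] with κ hκ
      have hsp : Real.sqrt κ ≠ 0 := ne_of_gt (Real.sqrt_pos.2 (by linarith))
      field_simp
      simp only [hg]
      push_cast
      ring
    simpa using hfac.div_const ((m - 1).factorial : ℝ)
end

section
/- With h_k^n defined recursively by h_k^n(k,z) = 1 and h_k^n(ℓ,x) = ∫_x^{X₀(n−ℓ)} h_k^n(ℓ+1,y) dy for ℓ < k, one has the derivative identity ∂_x^k h_ℓ^n(0, x)|_{x = X₀(n−k)} = (−1)^k · 1{k = ℓ} for all 0 ≤ k, ℓ ≤ n−1. -/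
open intervalIntegral MeasureTheory

theorem h_derivative_identity (n : ℕ) (X₀ : ℕ → ℝ) (h : ℕ → ℕ → ℝ → ℝ)
    (hbase : ∀ k, ∀ z : ℝ, h k k z = 1)
    (hrec : ∀ k, ∀ ℓ < k, ∀ x : ℝ, h k ℓ x = ∫ y in x..(X₀ (n - ℓ)), h k (ℓ + 1) y) :
    ∀ k ≤ n - 1, ∀ ℓ ≤ n - 1,
      iteratedDeriv k (fun x => h ℓ 0 x) (X₀ (n - k)) =
        if k = ℓ then (-1 : ℝ) ^ k else 0 := by
  -- key: continuity and derivative of h ℓ j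
  have key : ∀ d ℓ j, j + d = ℓ → Continuous (h ℓ j) ∧
      (j < ℓ → ∀ x, HasDerivAt (h ℓ j) (-(h ℓ (j+1) x)) x) := by
    intro d
    induction d with
    | zero =>
      intro ℓ j hj
      have : j = ℓ := by omega
      subst this
      refine ⟨?_, fun hlt => absurd hlt (lt_irrefl _)⟩
      have : h j j = fun _ : ℝ => (1 : ℝ) := funext (hbase j)
      rw [this]; exact continuous_const
    | succ d ih =>
      intro ℓ j hj
      have hjl : j < ℓ := by omega
      obtain ⟨hc, _⟩ := ih ℓ (j + 1) (by omega)
      have heq : h ℓ j = fun u => ∫ y in u..(X₀ (n - j)), h ℓ (j + 1) y :=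
        funext (hrec ℓ j hjl)
      have hd : ∀ x, HasDerivAt (h ℓ j) (-(h ℓ (j+1) x)) x := by
        intro x
        rw [heq]
        exact intervalIntegral.integral_hasDerivAt_left
          (hc.intervalIntegrable _ _)
          (hc.stronglyMeasurable.stronglyMeasurableAtFilter)
          hc.continuousAt
      have hdiff : Differentiable ℝ (h ℓ j) := fun x => (hd x).differentiableAt
      exact ⟨hdiff.continuous, fun _ => hd⟩
  have hderiv : ∀ ℓ j, j < ℓ → deriv (h ℓ j) = fun x => -(h ℓ (j+1) x) := by
    intro ℓ j hjl
    funext x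
    exact ((key (ℓ - j) ℓ j (by omega)).2 hjl x).deriv
  -- iterated derivatives up to ℓ
  have iter : ∀ ℓ, ∀ m ≤ ℓ, iteratedDeriv m (h ℓ 0) = fun x => (-1 : ℝ) ^ m * h ℓ m x := by
    intro ℓ m
    induction m with
    | zero => intro _; funext x; simp [iteratedDeriv_zero]
    | succ m ih =>
      intro hm
      have hml : m < ℓ := by omega
      rw [iteratedDeriv_succ, ih (by omega)]
      funext x
      have hdm : DifferentiableAt ℝ (h ℓ m) x :=
        (((key (ℓ - m) ℓ m (by omega)).2 hml) x).differentiableAt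
      rw [deriv_const_mul _ hdm, congrFun (hderiv ℓ m hml) x]
      ring
  -- iterated derivatives above ℓ vanish
  have zero : ∀ ℓ m, iteratedDeriv (ℓ + 1 + m) (h ℓ 0) = fun _ : ℝ => (0 : ℝ) := by
    intro ℓ m
    induction m with
    | zero =>
      rw [Nat.add_zero, iteratedDeriv_succ, iter ℓ ℓ le_rfl]
      have : (fun x => (-1 : ℝ) ^ ℓ * h ℓ ℓ x) = fun _ : ℝ => (-1 : ℝ) ^ ℓ := by
        funext x; rw [hbase ℓ x, mul_one]
      rw [this]
      funext x; exact deriv_const x _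
    | succ m ih =>
      have : ℓ + 1 + (m + 1) = (ℓ + 1 + m) + 1 := by omega
      rw [this, iteratedDeriv_succ, ih]
      funext x; exact deriv_const x _
  intro k _ ℓ _
  rcases lt_trichotomy k ℓ with hkl | hkl | hkl
  · rw [if_neg (by omega)]
    show iteratedDeriv k (h ℓ 0) (X₀ (n - k)) = 0
    rw [iter ℓ k hkl.le]
    show (-1 : ℝ) ^ k * h ℓ k (X₀ (n - k)) = 0
    rw [hrec ℓ k hkl, intervalIntegral.integral_same, mul_zero]
  · subst hkl
    rw [if_pos rfl]
    show iteratedDeriv k (h k 0) (X₀ (n - k)) = (-1 : ℝ) ^ k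
    rw [iter k k le_rfl]
    show (-1 : ℝ) ^ k * h k k (X₀ (n - k)) = (-1 : ℝ) ^ k
    rw [hbase, mul_one]
  · rw [if_neg (by omega)]
    show iteratedDeriv k (h ℓ 0) (X₀ (n - k)) = 0
    have : k = ℓ + 1 + (k - ℓ - 1) := by omega
    rw [this, zero ℓ (k - ℓ - 1)]
end

section
/- Let Ψ_k^n = ∂^k e^{(t/2)∂²} δ_{X₀(n−k)}, i.e. Ψ_k^n(x) = ∂_x^k p_t(x − X₀(n−k)) with p_t the heat kernel, and let Φ_k^n = e^{−(t/2)∂²} h_k^n(0,·) (backwards heat flow applied to the polynomial h_k^n(0,·)). Then the biorthogonality relation ∫_ℝ Ψ_k^n(x) Φ_ℓ^n(x) dx = 1{k = ℓ} holds for all 0 ≤ k, ℓ ≤ n−1. -/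
open Polynomial MeasureTheory

/-- The backwards heat flow `e^{-(t/2)∂²}` acting on polynomials:
`e^{-(t/2)∂²} p = Σ_j (-t/2)^j p^{(2j)} / j!` (a finite sum). -/
noncomputable def backHeat (t : ℝ) (p : Polynomial ℝ) : Polynomial ℝ :=
  ∑ j ∈ Finset.range (p.natDegree + 1),
    C ((-t / 2) ^ j / (Nat.factorial j)) * derivative^[2 * j] p

/-- `Ψ_k^n(x) = ∂^k p_t(x - X₀(n-k))` with `p_t` the heat kernel. -/
noncomputable def PsiRBM (t : ℝ) (n : ℕ) (X₀ : ℕ → ℝ) (k : ℕ) (x : ℝ) : ℝ :=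
  iteratedDeriv k
    (fun u => (2 * Real.pi * t) ^ (-(1 : ℝ) / 2) *
      Real.exp (-(u - X₀ (n - k)) ^ 2 / (2 * t))) x

open Finset

noncomputable def flowP (c : ℕ → ℝ) (p : Polynomial ℝ) : Polynomial ℝ :=
  ∑ j ∈ Finset.range (p.natDegree + 1),
    C (c j) * derivative^[2 * j] p

lemma flowP_eq_sum (c : ℕ → ℝ) (p : Polynomial ℝ) {N : ℕ} (hN : p.natDegree ≤ N) :
    flowP c p = ∑ j ∈ Finset.range (N + 1), C (c j) * derivative^[2 * j] p := by
  refine Finset.sum_subset (by intro x hx; simp only [Finset.mem_range] at hx ⊢; omega) ?_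
  intro j hj hj'
  rw [Polynomial.iterate_derivative_eq_zero, mul_zero]
  simp only [Finset.mem_range, not_lt] at hj'
  omega

lemma flowP_add (c : ℕ → ℝ) (p q : Polynomial ℝ) :
    flowP c (p + q) = flowP c p + flowP c q := by
  set N := (p+q).natDegree + p.natDegree + q.natDegree with hN
  rw [flowP_eq_sum c (p+q) (N := N) (by omega), flowP_eq_sum c p (N := N) (by omega),
    flowP_eq_sum c q (N := N) (by omega), ← Finset.sum_add_distrib]
  refine Finset.sum_congr rfl fun j _ => ?_
  rw [iterate_map_add (f := (derivative : Polynomial ℝ →ₗ[ℝ] Polynomial ℝ)), mul_add]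

lemma flowP_C_mul (c : ℕ → ℝ) (r : ℝ) (p : Polynomial ℝ) :
    flowP c (C r * p) = C r * flowP c p := by
  rw [flowP_eq_sum c (C r * p) (N := p.natDegree) (natDegree_C_mul_le r p),
    flowP, Finset.mul_sum]
  refine Finset.sum_congr rfl fun j _ => ?_
  rw [Polynomial.iterate_derivative_C_mul]
  ring

lemma flowP_derivative (c : ℕ → ℝ) (p : Polynomial ℝ) :
    derivative (flowP c p) = flowP c (derivative p) := by
  rw [flowP, derivative_sum, flowP_eq_sum c (derivative p) (N := p.natDegree)
    ((natDegree_derivative_le p).trans (Nat.sub_le _ _))]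
  refine Finset.sum_congr rfl fun j _ => ?_
  rw [derivative_C_mul, ← Function.iterate_succ_apply derivative,
    ← Function.iterate_succ_apply' derivative]
lemma conv_exp (u : ℝ) (m : ℕ) :
    ∑ i ∈ Finset.range (m + 1), (u ^ i / (Nat.factorial i)) *
      ((-u) ^ (m - i) / (Nat.factorial (m - i))) = if m = 0 then 1 else 0 := by
  have key : ∀ i ∈ Finset.range (m + 1),
      (u ^ i / (Nat.factorial i)) * ((-u) ^ (m - i) / (Nat.factorial (m - i)))
        = u ^ i * (-u) ^ (m - i) * (m.choose i) / (Nat.factorial m) := by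
    intro i hi
    rw [Finset.mem_range] at hi
    have hle : i ≤ m := by omega
    have hfact : ((Nat.factorial i : ℝ)) * (Nat.factorial (m - i)) * (m.choose i)
        = (Nat.factorial m) := by
      norm_cast
      rw [← Nat.choose_mul_factorial_mul_factorial hle]
      ring
    have h1 : (Nat.factorial i : ℝ) ≠ 0 := by positivity
    have h2 : (Nat.factorial (m-i) : ℝ) ≠ 0 := by positivity
    have h3 : (Nat.factorial m : ℝ) ≠ 0 := by positivity
    field_simp
    rw [← hfact]
    ring
  rw [Finset.sum_congr rfl key, ← Finset.sum_div]
  have := add_pow u (-u) m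
  simp only [add_neg_cancel] at this
  rw [← this, zero_pow_eq]
  split
  · simp_all
  · simp [Nat.factorial_ne_zero]

lemma flowP_iterate_derivative (c : ℕ → ℝ) (p : Polynomial ℝ) (k : ℕ) :
    derivative^[k] (flowP c p) = flowP c (derivative^[k] p) := by
  induction k with
  | zero => rfl
  | succ k ih =>
      rw [Function.iterate_succ_apply', ih, flowP_derivative]
      rw [show derivative^[k+1] p = derivative (derivative^[k] p) from
        Function.iterate_succ_apply' _ _ _]

lemma flowP_natDegree_le (c : ℕ → ℝ) (p : Polynomial ℝ) :
    (flowP c p).natDegree ≤ p.natDegree := by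
  refine Polynomial.natDegree_sum_le_of_forall_le _ _ fun j _ => ?_
  exact (natDegree_C_mul_le _ _).trans
    ((Polynomial.natDegree_iterate_derivative p _).trans (Nat.sub_le _ _))

lemma flowP_flowP (t : ℝ) (p : Polynomial ℝ) :
    flowP (fun j => (t/2)^j / (Nat.factorial j)) (flowP (fun j => (-t/2)^j / (Nat.factorial j)) p)
      = p := by
  set f : ℕ → ℝ := fun j => (t/2)^j / (Nat.factorial j) with hf
  set b : ℕ → ℝ := fun j => (-t/2)^j / (Nat.factorial j) with hb
  set N := p.natDegree with hNdef
  have h1 : flowP f (flowP b p)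
      = ∑ j ∈ Finset.range (N+1), C (f j) * derivative^[2*j] (flowP b p) :=
    flowP_eq_sum _ _ (flowP_natDegree_le _ _)
  have h2 : ∀ j, derivative^[2*j] (flowP b p)
      = ∑ i ∈ Finset.range (N+1), C (b i) * derivative^[2*(j+i)] p := by
    intro j
    rw [flowP_iterate_derivative, flowP_eq_sum _ _ (N := N)
      ((Polynomial.natDegree_iterate_derivative p _).trans (Nat.sub_le _ _))]
    refine Finset.sum_congr rfl fun i _ => ?_
    rw [← Function.iterate_add_apply]
    congr 2
    ring
  -- square sum
  have h3 : flowP f (flowP b p)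
      = ∑ x ∈ Finset.range (N+1) ×ˢ Finset.range (N+1),
          C (f x.1 * b x.2) * derivative^[2*(x.1+x.2)] p := by
    rw [h1]
    rw [Finset.sum_product]
    refine Finset.sum_congr rfl fun j _ => ?_
    rw [h2 j, Finset.mul_sum]
    refine Finset.sum_congr rfl fun i _ => ?_
    rw [C_mul]; ring
  -- extend square to union of antidiagonals
  have hzero : ∀ x : ℕ × ℕ, N < x.1 + x.2 →
      C (f x.1 * b x.2) * derivative^[2*(x.1+x.2)] p = 0 := by
    intro x hx
    rw [Polynomial.iterate_derivative_eq_zero (by omega), mul_zero]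
  have h4 : flowP f (flowP b p)
      = ∑ x ∈ (Finset.range (2*N+2)).biUnion (fun m => Finset.HasAntidiagonal.antidiagonal m),
          C (f x.1 * b x.2) * derivative^[2*(x.1+x.2)] p := by
    rw [h3]
    refine Finset.sum_subset ?_ ?_
    · intro x hx
      rw [Finset.mem_product, Finset.mem_range, Finset.mem_range] at hx
      rw [Finset.mem_biUnion]
      exact ⟨x.1 + x.2, Finset.mem_range.mpr (by omega), Finset.HasAntidiagonal.mem_antidiagonal.mpr rfl⟩
    · intro x hx hx'
      rw [Finset.mem_product, Finset.mem_range, Finset.mem_range] at hx'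
      exact hzero x (by omega)
  rw [h4, Finset.sum_biUnion (by
    intro a _ b' _ hab
    simp only [Finset.disjoint_left]
    intro x hx hx2
    rw [Finset.HasAntidiagonal.mem_antidiagonal] at hx hx2
    exact hab (hx ▸ hx2))]
  have h5 : ∀ m ∈ Finset.range (2*N+2),
      (∑ x ∈ Finset.HasAntidiagonal.antidiagonal m, C (f x.1 * b x.2) * derivative^[2*(x.1+x.2)] p)
        = C (if m = 0 then 1 else 0) * derivative^[2*m] p := by
    intro m _
    have : ∀ x ∈ Finset.HasAntidiagonal.antidiagonal m,
        C (f x.1 * b x.2) * derivative^[2*(x.1+x.2)] p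
          = C (f x.1 * b x.2) * derivative^[2*m] p := by
      intro x hx
      rw [Finset.HasAntidiagonal.mem_antidiagonal] at hx
      rw [hx]
    rw [Finset.sum_congr rfl this, ← Finset.sum_mul]
    congr 1
    rw [← map_sum C]
    congr 1
    rw [Finset.Nat.sum_antidiagonal_eq_sum_range_succ_mk]
    simpa [hf, hb, neg_div] using conv_exp (t/2) m
  rw [Finset.sum_congr rfl h5]
  have h6 : ∀ m ∈ Finset.range (2*N+2), m ≠ 0 →
      C (if m = 0 then 1 else 0) * derivative^[2*m] p = 0 := by
    intro m _ hm
    simp [hm]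
  rw [Finset.sum_eq_single 0 h6 (by simp)]
  simp

lemma iterate_derivative_X_sub_mul (a : ℝ) (p : Polynomial ℝ) (j : ℕ) :
    derivative^[j+1] ((X - C a) * p)
      = C ((j:ℝ)+1) * derivative^[j] p + (X - C a) * derivative^[j+1] p := by
  induction j with
  | zero =>
      simp only [Function.iterate_one, derivative_mul, derivative_sub, derivative_X,
        derivative_C, sub_zero, one_mul, Nat.cast_zero, zero_add, map_one,
        Function.iterate_zero_apply]
  | succ j ih =>
      rw [show derivative^[j+1+1] ((X - C a) * p)
          = derivative (derivative^[j+1] ((X - C a)*p))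
        from Function.iterate_succ_apply' _ _ _, ih]
      simp only [derivative_add, derivative_mul, derivative_sub, derivative_X, derivative_C,
        sub_zero, one_mul, derivative_C_mul]
      rw [show derivative (derivative^[j] p) = derivative^[j+1] p from
        (Function.iterate_succ_apply' _ _ _).symm,
        show derivative (derivative^[j+1] p) = derivative^[j+1+1] p from
        (Function.iterate_succ_apply' _ _ _).symm]
      simp only [map_add, Nat.cast_add, Nat.cast_one, map_one]
      ring

/-- the forward-flow functional `p ↦ eval a (fwdHeat p)` satisfies the IBP-type relation. -/
lemma fwd_eval_X_sub_mul (t : ℝ) (a : ℝ) (p : Polynomial ℝ) :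
    eval a (flowP (fun j => (t/2)^j / (Nat.factorial j)) ((X - C a) * p))
      = t * eval a (flowP (fun j => (t/2)^j / (Nat.factorial j)) (derivative p)) := by
  set f : ℕ → ℝ := fun j => (t/2)^j / (Nat.factorial j) with hf
  have hdeg : ((X - C a) * p).natDegree ≤ p.natDegree + 1 := by
    refine (natDegree_mul_le).trans ?_
    have : (X - C a).natDegree ≤ 1 := natDegree_X_sub_C_le a
    omega
  rw [flowP_eq_sum f _ hdeg, flowP_eq_sum f (derivative p)
    ((natDegree_derivative_le p).trans (Nat.sub_le _ _))]
  rw [eval_finset_sum, eval_finset_sum, Finset.sum_range_succ']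
  have h0 : eval a (C (f 0) * derivative^[2*0] ((X - C a) * p)) = 0 := by
    simp
  rw [h0, add_zero, Finset.mul_sum]
  refine Finset.sum_congr rfl fun i hi => ?_
  have h2i : 2 * (i+1) = (2*i+1) + 1 := by ring
  rw [h2i, iterate_derivative_X_sub_mul]
  rw [eval_mul, eval_add, eval_mul, eval_mul, eval_sub, eval_X, eval_C, eval_C, eval_C,
    sub_self, zero_mul, add_zero]
  have hiter : derivative^[2*i] (derivative p) = derivative^[2*i+1] p := by
    rw [← Function.iterate_succ_apply]
  rw [eval_mul, eval_C, hiter]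
  have hfs : f (i+1) * (2*(i:ℝ)+1+1) = t * f i := by
    rw [hf]
    simp only [pow_succ, Nat.factorial_succ]
    push_cast
    have h1 : ((Nat.factorial i : ℝ)) ≠ 0 := by positivity
    field_simp
    ring
  push_cast
  calc f (i+1) * ((2*(i:ℝ)+1+1) * eval a (derivative^[2*i+1] p))
      = (f (i+1) * (2*(i:ℝ)+1+1)) * eval a (derivative^[2*i+1] p) := by ring
    _ = t * (f i * eval a (derivative^[2*i+1] p)) := by rw [hfs]; ring

lemma functional_unique (t a : ℝ) (F G : Polynomial ℝ → ℝ)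
    (hFadd : ∀ p q, F (p + q) = F p + F q)
    (hFC : ∀ c p, F (C c * p) = c * F p)
    (hF1 : F 1 = 1)
    (hFX : ∀ p, F ((X - C a) * p) = t * F (derivative p))
    (hGadd : ∀ p q, G (p + q) = G p + G q)
    (hGC : ∀ c p, G (C c * p) = c * G p)
    (hG1 : G 1 = 1)
    (hGX : ∀ p, G ((X - C a) * p) = t * G (derivative p)) :
    ∀ p, F p = G p := by
  have hF0 : F 0 = 0 := by
    have := hFC 0 0
    simpa using this
  have hG0 : G 0 = 0 := by
    have := hGC 0 0
    simpa using this
  have hpow : ∀ m, F ((X - C a) ^ m) = G ((X - C a) ^ m) := by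
    intro m
    induction m using Nat.strong_induction_on with
    | _ m ih =>
      match m with
      | 0 => simpa using hF1.trans hG1.symm
      | Nat.succ m =>
        rw [pow_succ', hFX, hGX, derivative_pow]
        simp only [derivative_sub, derivative_X, derivative_C, sub_zero, mul_one]
        rw [hFC, hGC]
        rcases Nat.eq_zero_or_pos m with hm | hm
        · subst hm; simp
        · rw [ih (m - 1) (by omega)]
  intro p
  have hFsum : ∀ (s : Finset ℕ) (f : ℕ → Polynomial ℝ),
      F (∑ i ∈ s, f i) = ∑ i ∈ s, F (f i) := by
    intro s f
    induction s using Finset.cons_induction with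
    | empty => simpa using hF0
    | cons i s his ih => rw [Finset.sum_cons, Finset.sum_cons, hFadd, ih]
  have hGsum : ∀ (s : Finset ℕ) (f : ℕ → Polynomial ℝ),
      G (∑ i ∈ s, f i) = ∑ i ∈ s, G (f i) := by
    intro s f
    induction s using Finset.cons_induction with
    | empty => simpa using hG0
    | cons i s his ih => rw [Finset.sum_cons, Finset.sum_cons, hGadd, ih]
  rw [← Polynomial.sum_taylor_eq p a]
  rw [Polynomial.sum_def, hFsum, hGsum]
  refine Finset.sum_congr rfl fun i _ => ?_
  rw [hFC, hGC, hpow]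

noncomputable def Gau (t a : ℝ) (x : ℝ) : ℝ :=
  (2 * Real.pi * t) ^ (-(1 : ℝ) / 2) * Real.exp (-(x - a) ^ 2 / (2 * t))

lemma hasDerivAt_Gau {t : ℝ} (ht : 0 < t) (a x : ℝ) :
    HasDerivAt (Gau t a) (((a - x) / t) * Gau t a x) x := by
  have h1 : HasDerivAt (fun x : ℝ => -(x - a) ^ 2 / (2 * t)) (-(x - a) / t) x := by
    have : HasDerivAt (fun x : ℝ => x - a) 1 x := (hasDerivAt_id x).sub_const a
    have h2 := (this.pow 2).neg.div_const (2 * t)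
    refine h2.congr_deriv ?_
    field_simp
    ring
  have h3 := (h1.exp).const_mul ((2 * Real.pi * t) ^ (-(1 : ℝ) / 2))
  refine h3.congr_deriv ?_
  unfold Gau
  ring

lemma continuous_Gau {t : ℝ} (ht : 0 < t) (a : ℝ) : Continuous (Gau t a) := by
  unfold Gau
  fun_prop

lemma integrable_poly_gauss {b : ℝ} (hb : 0 < b) (q : Polynomial ℝ) :
    MeasureTheory.Integrable (fun y : ℝ => Polynomial.eval y q * Real.exp (-b * y ^ 2)) := by
  induction q using Polynomial.induction_on' with
  | add p q hp hq =>
      simp only [Polynomial.eval_add, add_mul]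
      exact hp.add hq
  | monomial m c =>
      have base : MeasureTheory.Integrable (fun y : ℝ => y ^ m * Real.exp (-b * y ^ 2)) := by
        have := integrable_rpow_mul_exp_neg_mul_sq hb
          (s := (m : ℝ)) (lt_of_lt_of_le (by norm_num) (Nat.cast_nonneg m))
        simpa [Real.rpow_natCast] using this
      have := base.const_mul c
      refine this.congr ?_
      filter_upwards with y
      simp [Polynomial.eval_monomial]
      ring

lemma integrable_poly_Gau {t : ℝ} (ht : 0 < t) (a : ℝ) (p : Polynomial ℝ) :
    MeasureTheory.Integrable (fun x : ℝ => Polynomial.eval x p * Gau t a x) := by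
  have hb : 0 < 1 / (2 * t) := by positivity
  have h1 := integrable_poly_gauss hb (p.comp (Polynomial.X + Polynomial.C a))
  have h2 := h1.comp_sub_right a
  have h3 := h2.const_mul ((2 * Real.pi * t) ^ (-(1 : ℝ) / 2))
  refine h3.congr ?_
  filter_upwards with x
  simp only [Polynomial.eval_comp, Polynomial.eval_add, Polynomial.eval_X, Polynomial.eval_C]
  unfold Gau
  rw [show x - a + a = x from by ring]
  rw [show -(1 / (2 * t)) * (x - a) ^ 2 = -(x - a) ^ 2 / (2 * t) from by
    field_simp]
  ring

lemma integral_Gau {t : ℝ} (ht : 0 < t) (a : ℝ) : ∫ x : ℝ, Gau t a x = 1 := by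
  have hb : 0 < 1 / (2 * t) := by positivity
  unfold Gau
  rw [MeasureTheory.integral_const_mul]
  have htr : ∫ x : ℝ, Real.exp (-(x - a) ^ 2 / (2 * t))
      = ∫ x : ℝ, Real.exp (-(1 / (2 * t)) * x ^ 2) := by
    rw [← MeasureTheory.integral_add_right_eq_self
      (fun x : ℝ => Real.exp (-(1 / (2 * t)) * x ^ 2)) (-a)]
    congr 1
    funext x
    rw [show x + -a = x - a from by ring]
    congr 1
    field_simp
  rw [htr, integral_gaussian]
  have hπ : Real.pi / (1 / (2 * t)) = 2 * Real.pi * t := by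
    field_simp
  rw [hπ]
  have hpos : (0 : ℝ) < 2 * Real.pi * t := by positivity
  rw [Real.sqrt_eq_rpow, ← Real.rpow_add hpos]
  norm_num

lemma Gau_IBP {t : ℝ} (ht : 0 < t) (a : ℝ) (p : Polynomial ℝ) :
    ∫ x : ℝ, Gau t a x * Polynomial.eval x ((X - C a) * p)
      = t * ∫ x : ℝ, Gau t a x * Polynomial.eval x (derivative p) := by
  have key := MeasureTheory.integral_mul_deriv_eq_deriv_mul_of_integrable
    (u := Gau t a) (u' := fun x => ((a - x) / t) * Gau t a x)
    (v := fun x => Polynomial.eval x p) (v' := fun x => Polynomial.eval x (derivative p))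
    (fun x _ => hasDerivAt_Gau ht a x) (fun x _ => Polynomial.hasDerivAt p x)
    ?_ ?_ ?_
  · have h1 : ∫ x : ℝ, Gau t a x * Polynomial.eval x (derivative p)
        = - ∫ x : ℝ, ((a - x) / t) * Gau t a x * Polynomial.eval x p := key
    rw [h1, ← MeasureTheory.integral_neg, ← MeasureTheory.integral_const_mul]
    congr 1
    funext x
    simp only [Polynomial.eval_mul, Polynomial.eval_sub, Polynomial.eval_X, Polynomial.eval_C]
    field_simp
    ring
  · have := integrable_poly_Gau ht a (derivative p)
    refine this.congr ?_
    filter_upwards with x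
    rw [Pi.mul_apply]
    ring
  · have := integrable_poly_Gau ht a (C (1/t) * (C a - X) * p)
    refine this.congr ?_
    filter_upwards with x
    rw [Pi.mul_apply]
    simp only [Polynomial.eval_mul, Polynomial.eval_sub, Polynomial.eval_X, Polynomial.eval_C]
    field_simp
  · have := integrable_poly_Gau ht a p
    refine this.congr ?_
    filter_upwards with x
    rw [Pi.mul_apply]
    ring

lemma Gau_moments {t : ℝ} (ht : 0 < t) (a : ℝ) (p : Polynomial ℝ) :
    ∫ x : ℝ, Gau t a x * Polynomial.eval x p
      = Polynomial.eval a (flowP (fun j => (t/2)^j / (Nat.factorial j)) p) := by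
  refine functional_unique t a (fun p => ∫ x : ℝ, Gau t a x * Polynomial.eval x p)
    (fun p => Polynomial.eval a (flowP (fun j => (t/2)^j / (Nat.factorial j)) p))
    ?_ ?_ ?_ ?_ ?_ ?_ ?_ ?_ p
  · intro p q
    rw [← MeasureTheory.integral_add]
    · congr 1
      funext x
      rw [Polynomial.eval_add]
      ring
    · have := integrable_poly_Gau ht a p
      exact this.congr (by filter_upwards with x; ring)
    · have := integrable_poly_Gau ht a q
      exact this.congr (by filter_upwards with x; ring)
  · intro c p
    rw [← MeasureTheory.integral_const_mul]
    congr 1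
    funext x
    rw [Polynomial.eval_mul, Polynomial.eval_C]
    ring
  · simpa using integral_Gau ht a
  · exact Gau_IBP ht a
  · intro p q
    rw [flowP_add, Polynomial.eval_add]
  · intro c p
    rw [flowP_C_mul, Polynomial.eval_mul, Polynomial.eval_C]
  · unfold flowP
    simp
  · exact fwd_eval_X_sub_mul t a

noncomputable def qkP (t a : ℝ) : ℕ → Polynomial ℝ
  | 0 => 1
  | k + 1 => derivative (qkP t a k) + C (1/t) * (C a - X) * qkP t a k

lemma hasDerivAt_polyGau {t : ℝ} (ht : 0 < t) (a : ℝ) (r : Polynomial ℝ) (x : ℝ) :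
    HasDerivAt (fun x => Polynomial.eval x r * Gau t a x)
      (Polynomial.eval x (derivative r + C (1/t) * (C a - X) * r) * Gau t a x) x := by
  have h := (Polynomial.hasDerivAt r x).mul (hasDerivAt_Gau ht a x)
  refine h.congr_deriv ?_
  simp only [Polynomial.eval_add, Polynomial.eval_mul, Polynomial.eval_sub, Polynomial.eval_X,
    Polynomial.eval_C]
  field_simp

lemma iteratedDeriv_Gau {t : ℝ} (ht : 0 < t) (a : ℝ) (k : ℕ) :
    iteratedDeriv k (Gau t a) = fun x => Polynomial.eval x (qkP t a k) * Gau t a x := by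
  induction k with
  | zero => simp [qkP]
  | succ k ih =>
      rw [iteratedDeriv_succ, ih]
      funext x
      rw [show qkP t a (k+1) = derivative (qkP t a k) + C (1/t) * (C a - X) * qkP t a k from rfl]
      exact (hasDerivAt_polyGau ht a (qkP t a k) x).deriv

lemma Gau_IBP_chain {t : ℝ} (ht : 0 < t) (a : ℝ) (k : ℕ) (r : Polynomial ℝ) :
    ∫ x : ℝ, iteratedDeriv k (Gau t a) x * Polynomial.eval x r
      = (-1 : ℝ)^k * ∫ x : ℝ, Gau t a x * Polynomial.eval x (derivative^[k] r) := by
  induction k generalizing r with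
  | zero => simp
  | succ k ih =>
      have step : ∫ x : ℝ, iteratedDeriv (k+1) (Gau t a) x * Polynomial.eval x r
          = - ∫ x : ℝ, iteratedDeriv k (Gau t a) x * Polynomial.eval x (derivative r) := by
        rw [iteratedDeriv_Gau ht a (k+1), iteratedDeriv_Gau ht a k]
        have key := MeasureTheory.integral_mul_deriv_eq_deriv_mul_of_integrable
          (u := fun x => Polynomial.eval x (qkP t a k) * Gau t a x)
          (u' := fun x => Polynomial.eval x (qkP t a (k+1)) * Gau t a x)
          (v := fun x => Polynomial.eval x r)
          (v' := fun x => Polynomial.eval x (derivative r))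
          (fun x _ => hasDerivAt_polyGau ht a (qkP t a k) x)
          (fun x _ => Polynomial.hasDerivAt r x)
          ?_ ?_ ?_
        · rw [← neg_eq_iff_eq_neg] at key
          rw [← key]
        · have := integrable_poly_Gau ht a (qkP t a k * derivative r)
          refine this.congr ?_
          filter_upwards with x
          rw [Pi.mul_apply, Polynomial.eval_mul]
          ring
        · have := integrable_poly_Gau ht a (qkP t a (k+1) * r)
          refine this.congr ?_
          filter_upwards with x
          rw [Pi.mul_apply, Polynomial.eval_mul]
          ring
        · have := integrable_poly_Gau ht a (qkP t a k * r)
          refine this.congr ?_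
          filter_upwards with x
          rw [Pi.mul_apply, Polynomial.eval_mul]
          ring
      rw [step, ih (derivative r)]
      rw [show derivative^[k] (derivative r) = derivative^[k+1] r from
        (Function.iterate_succ_apply _ _ _).symm]
      ring

lemma polyEval_iteratedDeriv (p : Polynomial ℝ) (k : ℕ) :
    iteratedDeriv k (fun x => Polynomial.eval x p)
      = fun x => Polynomial.eval x (derivative^[k] p) := by
  induction k generalizing p with
  | zero => simp
  | succ k ih =>
      rw [iteratedDeriv_succ, ih p]
      funext x
      rw [show derivative^[k+1] p = derivative (derivative^[k] p) from
        Function.iterate_succ_apply' _ _ _]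
      exact (Polynomial.hasDerivAt _ x).deriv

lemma h_eval_key (n : ℕ) (X₀ : ℕ → ℝ) (h : ℕ → ℕ → ℝ → ℝ)
    (hbase : ∀ k, ∀ z : ℝ, h k k z = 1)
    (hrec : ∀ k, ∀ ℓ < k, ∀ x : ℝ, h k ℓ x = ∫ y in x..(X₀ (n - ℓ)), h k (ℓ + 1) y)
    (P : ℕ → Polynomial ℝ) (hP : ∀ k, ∀ x : ℝ, (P k).eval x = h k 0 x) (k ℓ : ℕ) :
    Polynomial.eval (X₀ (n - k)) (derivative^[k] (P ℓ))
      = (-1 : ℝ)^k * (if k = ℓ then 1 else 0) := by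
  have hD : ∀ j, j < ℓ → Continuous (h ℓ (j+1)) →
      ∀ x, HasDerivAt (h ℓ j) (-(h ℓ (j+1) x)) x := by
    intro j hj hg x
    have base : HasDerivAt (fun u => ∫ y in u..(X₀ (n-j)), h ℓ (j+1) y)
        (-(h ℓ (j+1) x)) x :=
      intervalIntegral.integral_hasDerivAt_left (hg.intervalIntegrable _ _)
        (hg.stronglyMeasurableAtFilter _ _) hg.continuousAt
    exact base.congr_of_eventuallyEq (Filter.Eventually.of_forall fun y => hrec ℓ j hj y)
  have hcont : ∀ d j, j + d = ℓ → Continuous (h ℓ j) := by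
    intro d
    induction d with
    | zero =>
        intro j hj
        have : h ℓ j = fun _ => 1 := by
          funext z
          rw [show j = ℓ from by omega]
          exact hbase ℓ z
        rw [this]
        exact continuous_const
    | succ d ih =>
        intro j hj
        have hjl : j < ℓ := by omega
        have hg : Continuous (h ℓ (j+1)) := ih (j+1) (by omega)
        have : Differentiable ℝ (h ℓ j) := fun x => (hD j hjl hg x).differentiableAt
        exact this.continuous
  have hiter : ∀ j, j ≤ ℓ → iteratedDeriv j (h ℓ 0) = fun x => (-1:ℝ)^j * h ℓ j x := by
    intro j
    induction j with
    | zero => intro _; funext x; simp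
    | succ j ih =>
        intro hj
        rw [iteratedDeriv_succ, ih (by omega)]
        funext x
        have hg : Continuous (h ℓ (j+1)) := hcont (ℓ - (j+1)) (j+1) (by omega)
        have := ((hD j (by omega) hg x).const_mul ((-1:ℝ)^j)).deriv
        rw [this]
        ring
  have hP' : (fun x => Polynomial.eval x (P ℓ)) = h ℓ 0 := funext (hP ℓ)
  rcases lt_trichotomy k ℓ with hkl | hkl | hkl
  · -- k < ℓ : value is 0
    have : Polynomial.eval (X₀ (n - k)) (derivative^[k] (P ℓ))
        = iteratedDeriv k (h ℓ 0) (X₀ (n-k)) := by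
      rw [← hP', polyEval_iteratedDeriv]
    rw [this, hiter k (by omega)]
    rw [if_neg (by omega)]
    dsimp only
    rw [hrec ℓ k hkl (X₀ (n - k)), intervalIntegral.integral_same]
  · subst hkl
    have : Polynomial.eval (X₀ (n - k)) (derivative^[k] (P k))
        = iteratedDeriv k (h k 0) (X₀ (n-k)) := by
      rw [← hP', polyEval_iteratedDeriv]
    rw [this, hiter k le_rfl, if_pos rfl]
    dsimp only
    rw [hbase]
  · -- k > ℓ : polynomial is zero
    have hconst : derivative^[ℓ] (P ℓ) = C ((-1:ℝ)^ℓ) := by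
      apply Polynomial.funext
      intro x
      have : Polynomial.eval x (derivative^[ℓ] (P ℓ)) = iteratedDeriv ℓ (h ℓ 0) x := by
        rw [← hP', polyEval_iteratedDeriv]
      rw [this, hiter ℓ le_rfl, Polynomial.eval_C]
      dsimp only
      rw [hbase]
      ring
    have hzero : derivative^[k] (P ℓ) = 0 := by
      rw [show k = (k - ℓ) + ℓ from by omega, Function.iterate_add_apply, hconst,
        Polynomial.iterate_derivative_eq_zero]
      rw [Polynomial.natDegree_C]
      omega
    rw [hzero]
    rw [if_neg (by omega)]
    simp

theorem RBM_biorthogonality (t : ℝ) (ht : 0 < t) (n : ℕ) (X₀ : ℕ → ℝ)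
    (h : ℕ → ℕ → ℝ → ℝ)
    (hbase : ∀ k, ∀ z : ℝ, h k k z = 1)
    (hrec : ∀ k, ∀ ℓ < k, ∀ x : ℝ, h k ℓ x = ∫ y in x..(X₀ (n - ℓ)), h k (ℓ + 1) y)
    (P : ℕ → Polynomial ℝ) (hP : ∀ k, ∀ x : ℝ, (P k).eval x = h k 0 x) :
    ∀ k ≤ n - 1, ∀ ℓ ≤ n - 1,
      ∫ x : ℝ, PsiRBM t n X₀ k x * (backHeat t (P ℓ)).eval x =
        if k = ℓ then 1 else 0 := by
  intro k _ ℓ _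
  set a : ℝ := X₀ (n - k) with ha
  have hBH : backHeat t (P ℓ) = flowP (fun j => (-t/2)^j / (Nat.factorial j)) (P ℓ) := rfl
  have hPsi : ∀ x, PsiRBM t n X₀ k x = iteratedDeriv k (Gau t a) x := fun x => rfl
  calc ∫ x : ℝ, PsiRBM t n X₀ k x * (backHeat t (P ℓ)).eval x
      = ∫ x : ℝ, iteratedDeriv k (Gau t a) x *
          Polynomial.eval x (flowP (fun j => (-t/2)^j / (Nat.factorial j)) (P ℓ)) := by
        congr 1
    _ = (-1 : ℝ)^k * ∫ x : ℝ, Gau t a x *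
          Polynomial.eval x (derivative^[k]
            (flowP (fun j => (-t/2)^j / (Nat.factorial j)) (P ℓ))) :=
        Gau_IBP_chain ht a k _
    _ = (-1 : ℝ)^k * Polynomial.eval a
          (flowP (fun j => (t/2)^j / (Nat.factorial j))
            (flowP (fun j => (-t/2)^j / (Nat.factorial j)) (derivative^[k] (P ℓ)))) := by
        rw [Gau_moments ht a, flowP_iterate_derivative]
    _ = (-1 : ℝ)^k * Polynomial.eval a (derivative^[k] (P ℓ)) := by
        rw [flowP_flowP]
    _ = (-1 : ℝ)^k * ((-1 : ℝ)^k * (if k = ℓ then 1 else 0)) := by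
        rw [← ha] at *
        rw [h_eval_key n X₀ h hbase hrec P hP k ℓ]
    _ = (if k = ℓ then 1 else 0) := by
        rw [← mul_assoc, ← mul_pow]
        norm_num
end
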